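/- Let A be a finite set of atoms partitioned into colours C, let Aut be the group of colour-preserving permutations of A, and let Q be an object (element of the hereditarily finite sets over A, or more generally any set on which Aut acts compatibly). If X₁ and X₂ are both supports of Q (i.e., every automorphism fixing X₁ pointwise fixes Q, and similarly for X₂), and for every colour c ∈ C the set (A \ (X₁ ∪ X₂)) ∩ c is nonempty, then X₁ ∩ X₂ is also a support of Q. -/

import Mathlib

open scoped Classical

/-- If `X₁` and `X₂` both support an object `Q` (every colour-preserving permutation of
the finite atom set fixing the support pointwise fixes `Q`), and every colour still has
an atom outside `X₁ ∪ X₂`, then `X₁ ∩ X₂` also supports `Q`. -/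
theorem support_intersection {α κ β : Type} [Fintype α] [DecidableEq α]
    [MulAction (Equiv.Perm α) β]
    (col : α → κ) (Q : β) (X₁ X₂ : Set α)
    (h₁ : ∀ π : Equiv.Perm α, (∀ a, col (π a) = col a) →
      (∀ a ∈ X₁, π a = a) → π • Q = Q)
    (h₂ : ∀ π : Equiv.Perm α, (∀ a, col (π a) = col a) →
      (∀ a ∈ X₂, π a = a) → π • Q = Q)
    (hcol : ∀ c ∈ Set.range col, ∃ a, a ∉ X₁ ∪ X₂ ∧ col a = c) :
    ∀ π : Equiv.Perm α, (∀ a, col (π a) = col a) →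
      (∀ a ∈ X₁ ∩ X₂, π a = a) → π • Q = Q := by
  -- swaps of same-coloured atoms are colour-preserving
  have colswap : ∀ a b : α, col a = col b → ∀ x, col (Equiv.swap a b x) = col x := by
    intro a b hab x
    rcases eq_or_ne x a with rfl | hxa
    · rw [Equiv.swap_apply_left]; exact hab.symm
    rcases eq_or_ne x b with rfl | hxb
    · rw [Equiv.swap_apply_right]; exact hab
    · rw [Equiv.swap_apply_of_ne_of_ne hxa hxb]
  have H1 : ∀ a b : α, col a = col b → a ∉ X₁ → b ∉ X₁ → Equiv.swap a b • Q = Q := by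
    intro a b hab ha hb
    exact h₁ _ (colswap a b hab) fun x hx =>
      Equiv.swap_apply_of_ne_of_ne (by rintro rfl; exact ha hx) (by rintro rfl; exact hb hx)
  have H2 : ∀ a b : α, col a = col b → a ∉ X₂ → b ∉ X₂ → Equiv.swap a b • Q = Q := by
    intro a b hab ha hb
    exact h₂ _ (colswap a b hab) fun x hx =>
      Equiv.swap_apply_of_ne_of_ne (by rintro rfl; exact ha hx) (by rintro rfl; exact hb hx)
  -- swaps of same-coloured atoms outside the intersection fix Q
  have swapQ : ∀ a b : α, col a = col b → a ∉ X₁ ∩ X₂ → b ∉ X₁ ∩ X₂ →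
      Equiv.swap a b • Q = Q := by
    intro a b hab ha hb
    by_cases ha1 : a ∈ X₁
    · have ha2 : a ∉ X₂ := fun h => ha ⟨ha1, h⟩
      by_cases hb2 : b ∈ X₂
      · have hb1 : b ∉ X₁ := fun h => hb ⟨h, hb2⟩
        obtain ⟨c, hc, hcc⟩ := hcol (col a) ⟨a, rfl⟩
        have hc1 : c ∉ X₁ := fun h => hc (Or.inl h)
        have hc2 : c ∉ X₂ := fun h => hc (Or.inr h)
        have hac : a ≠ c := fun e => hc1 (e ▸ ha1)
        have hbc : b ≠ c := fun e => hc2 (e ▸ hb2)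
        have hab' : a ≠ b := fun e => hb1 (e ▸ ha1)
        have key := Equiv.swap_mul_swap_mul_swap hbc hab'.symm
        rw [Equiv.swap_comm c a] at key
        rw [← key, mul_smul, mul_smul, H2 a c hcc.symm ha2 hc2,
          H1 b c (hab.symm.trans hcc.symm) hb1 hc1, H2 a c hcc.symm ha2 hc2]
      · exact H2 a b hab ha2 hb2
    · by_cases hb1 : b ∈ X₁
      · have hb2 : b ∉ X₂ := fun h => hb ⟨hb1, h⟩
        by_cases ha2 : a ∈ X₂
        · obtain ⟨c, hc, hcc⟩ := hcol (col a) ⟨a, rfl⟩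
          have hc1 : c ∉ X₁ := fun h => hc (Or.inl h)
          have hc2 : c ∉ X₂ := fun h => hc (Or.inr h)
          have hbc : b ≠ c := fun e => hc1 (e ▸ hb1)
          have hac : a ≠ c := fun e => hc2 (e ▸ ha2)
          have hab' : b ≠ a := fun e => hb2 (by rw [e]; exact ha2)
          have key := Equiv.swap_mul_swap_mul_swap hac hab'.symm
          rw [Equiv.swap_comm c b, Equiv.swap_comm b a] at key
          rw [← key, mul_smul, mul_smul, H2 b c (hab.symm.trans hcc.symm) hb2 hc2,
            H1 a c hcc.symm ha1 hc1, H2 b c (hab.symm.trans hcc.symm) hb2 hc2]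
        · exact H2 a b hab ha2 hb2
      · exact H1 a b hab ha1 hb1
  -- main induction on the number of moved atoms
  suffices h : ∀ n, ∀ π : Equiv.Perm α, (∀ a, col (π a) = col a) →
      (∀ a ∈ X₁ ∩ X₂, π a = a) →
      (Finset.univ.filter fun x => π x ≠ x).card = n → π • Q = Q by
    intro π hπc hπf; exact h _ π hπc hπf rfl
  intro n
  induction n using Nat.strong_induction_on with
  | _ n ih =>
    intro π hc hf hcard
    by_cases hπ : π = 1
    · simp [hπ]
    · obtain ⟨a, ha⟩ : ∃ a, π a ≠ a := by
        by_contra h; push_neg at h; exact hπ (Equiv.ext h)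
      have hcolab : col a = col (π a) := (hc a).symm
      have haX : a ∉ X₁ ∩ X₂ := fun h => ha (hf a h)
      have hbmoved : π (π a) ≠ π a := fun h => ha (π.injective h)
      have hbX : π a ∉ X₁ ∩ X₂ := fun h => hbmoved (hf _ h)
      set b := π a with hb
      set π' := Equiv.swap a b * π with hπ'
      have hπ'col : ∀ x, col (π' x) = col x := fun x => by
        rw [hπ', Equiv.Perm.mul_apply, colswap a b hcolab, hc]
      have hπ'fix : ∀ x ∈ X₁ ∩ X₂, π' x = x := by
        intro x hx
        have hxa : x ≠ a := fun e => haX (e ▸ hx)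
        have hxb : x ≠ b := fun e => hbX (e ▸ hx)
        rw [hπ', Equiv.Perm.mul_apply, hf x hx, Equiv.swap_apply_of_ne_of_ne hxa hxb]
      have hss : (Finset.univ.filter fun x => π' x ≠ x) ⊂
          (Finset.univ.filter fun x => π x ≠ x) := by
        constructor
        · intro x hx
          simp only [Finset.mem_filter, Finset.mem_univ, true_and] at hx ⊢
          intro hpx
          apply hx
          have hxa : x ≠ a := fun e => ha (by subst e; exact hpx)
          have hxb : x ≠ b := fun e => hbmoved (by subst e; exact hpx)
          rw [hπ', Equiv.Perm.mul_apply, hpx, Equiv.swap_apply_of_ne_of_ne hxa hxb]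
        · intro hsub
          have : a ∈ Finset.univ.filter fun x => π' x ≠ x := by
            apply hsub; simp; exact ha
          simp only [Finset.mem_filter, Finset.mem_univ, true_and] at this
          apply this
          rw [hπ', Equiv.Perm.mul_apply, ← hb, Equiv.swap_apply_right]
      have hcard' : (Finset.univ.filter fun x => π' x ≠ x).card < n :=
        hcard ▸ Finset.card_lt_card hss
      have hQ' : π' • Q = Q := ih _ hcard' π' hπ'col hπ'fix rfl
      have hdec : π = Equiv.swap a b * π' := by
        rw [hπ', ← mul_assoc, Equiv.swap_mul_self, one_mul]
      rw [hdec, mul_smul, hQ', swapQ a b hcolab haX hbX]
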